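/- Main theorem: suppose JA is an affine map. Then for all γ ∈ (0,1), λ ∈ (0,1] and every natural number n, RAγ ∘ T(Aγ,Bγ)^n = T(Bγ,Aγ)^n ∘ RAγ, where T^n denotes the n-fold composition of T with itself; i.e. for every x ∈ X, RAγ(T(Aγ,Bγ)^n(x)) = T(Bγ,Aγ)^n(RAγ(x)). -/
import Mathlib


theorem aacaStmt10 {X : Type*} [NormedAddCommGroup X] [InnerProductSpace ℝ X] [CompleteSpace X]
    (JA JB : X → X)
    (hJA : ∀ (x y : X) (t : ℝ), JA (t • x + (1 - t) • y) = t • JA x + (1 - t) • JA y)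
    (w : X) (γ lam : ℝ)
    (hγ : γ ∈ Set.Ioo (0 : ℝ) 1) (hlam : lam ∈ Set.Ioc (0 : ℝ) 1)
    (RAγ RBγ TAγBγ TBγAγ : X → X)
    (hRAγ : ∀ x, RAγ x = (2 * γ) • JA x + (2 * (1 - γ)) • w - x)
    (hRBγ : ∀ x, RBγ x = (2 * γ) • JB x + (2 * (1 - γ)) • w - x)
    (hTAB : ∀ x, TAγBγ x = (1 - lam) • x + lam • RBγ (RAγ x))
    (hTBA : ∀ x, TBγAγ x = (1 - lam) • x + lam • RAγ (RBγ x)) :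
    ∀ (n : ℕ) (x : X), RAγ (TAγBγ^[n] x) = TBγAγ^[n] (RAγ x) := by
  have hRaff : ∀ x y : X, RAγ ((1 - lam) • x + lam • y)
      = (1 - lam) • RAγ x + lam • RAγ y := by
    intro x y
    have hJ : JA ((1 - lam) • x + lam • y) = (1 - lam) • JA x + lam • JA y := by
      have := hJA x y (1 - lam)
      simpa using this
    rw [hRAγ, hRAγ, hRAγ, hJ]
    module
  have hstep : ∀ x : X, RAγ (TAγBγ x) = TBγAγ (RAγ x) := by
    intro x
    rw [hTAB, hTBA, hRaff]
  intro n
  induction n with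
  | zero => intro x; simp
  | succ k ih =>
    intro x
    rw [Function.iterate_succ_apply', Function.iterate_succ_apply', hstep, ih]
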